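/- Fix p ∈ (1/2, 1) and q = 1 − p, and let μ be the product (blocking) measure on {0,1}^ℤ under which the coordinates ζ(i), i ∈ ℤ, are independent Bernoulli with μ(ζ(i) = 1) = (p/q)^i / (1 + (p/q)^i). For Z ∈ ℤ write μ_Z = μ(· | Ω_Z) and μ_Z(i) = μ_Z({ζ : ζ(i) = 1}). Then for all Z, k, i ∈ ℤ, μ_Z(i) = μ_{Z+k}(i + k). -/

import Mathlib

open MeasureTheory ProbabilityTheory Filter Topology

/-- `Ω_Z`: configurations with finitely many particles strictly left of `Z` and finitely
many holes at or right of `Z`, in equal number. A configuration `ζ : ℤ → Bool` has a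
particle at `j` iff `ζ j = true`. -/
def OmegaZ (Z : ℤ) : Set (ℤ → Bool) :=
  {ζ | {j : ℤ | j < Z ∧ ζ j = true}.Finite ∧ {j : ℤ | Z ≤ j ∧ ζ j = false}.Finite ∧
    {j : ℤ | j < Z ∧ ζ j = true}.ncard = {j : ℤ | Z ≤ j ∧ ζ j = false}.ncard}

namespace Stmt7Aux


/-- cylinder set: agree with ζ on S -/
def cyl (ζ : ℤ → Bool) (S : Finset ℤ) : Set (ℤ → Bool) := {ω | ∀ j ∈ S, ω j = ζ j}

lemma measurableSet_eval (j : ℤ) (b : Bool) : MeasurableSet {ζ : ℤ → Bool | ζ j = b} := by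
  have : {ζ : ℤ → Bool | ζ j = b} = (fun ζ : ℤ → Bool => ζ j) ⁻¹' {b} := by
    ext ζ; simp
  rw [this]
  exact measurable_pi_apply j (MeasurableSet.singleton b)

lemma cyl_eq (ζ : ℤ → Bool) (S : Finset ℤ) :
    cyl ζ S = ⋂ j ∈ S, ((fun ω : ℤ → Bool => ω j) ⁻¹' {ζ j}) := by
  ext ω; simp [cyl]

lemma measurableSet_cyl (ζ : ℤ → Bool) (S : Finset ℤ) : MeasurableSet (cyl ζ S) := by
  rw [cyl_eq]
  exact MeasurableSet.biInter S.countable_toSet fun j _ =>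
    measurable_pi_apply j (MeasurableSet.singleton (ζ j))

variable {μ : Measure (ℤ → Bool)}

/-- measure of a cylinder from independence -/
lemma meas_cyl (hind : iIndepFun (fun i (ζ : ℤ → Bool) => ζ i) μ)
    (ζ : ℤ → Bool) (S : Finset ℤ) :
    μ (cyl ζ S) = ∏ j ∈ S, μ {ω | ω j = ζ j} := by
  rw [cyl_eq]
  have h := hind.meas_biInter (S := S)
    (s := fun j => (fun ω : ℤ → Bool => ω j) ⁻¹' {ζ j})
    (fun j _ => ⟨{ζ j}, MeasurableSet.singleton _, rfl⟩)
  rw [h]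
  refine Finset.prod_congr rfl fun j _ => ?_
  congr 1




lemma icc_subset (F : Finset ℤ) : ∀ᶠ n : ℕ in atTop, F ⊆ Finset.Icc (-(n:ℤ)) n := by
  refine eventually_atTop.2 ⟨F.sup Int.natAbs, fun n hn j hj => ?_⟩
  have h1 : j.natAbs ≤ n := le_trans (Finset.le_sup hj) hn
  have h2 : |j| ≤ (n : ℤ) := by
    rw [Int.abs_eq_natAbs]; exact_mod_cast h1
  rw [Finset.mem_Icc]
  exact ⟨neg_le_of_abs_le h2, le_of_abs_le h2⟩

lemma iInter_cyl (ζ : ℤ → Bool) :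
    (⋂ n : ℕ, cyl ζ (Finset.Icc (-(n : ℤ)) n)) = {ζ} := by
  ext ω
  simp only [Set.mem_iInter, Set.mem_singleton_iff, cyl, Set.mem_setOf_eq]
  constructor
  · intro h
    funext j
    exact h j.natAbs j (by
      rw [Finset.mem_Icc]
      constructor
      · exact neg_le_of_abs_le (by rw [Int.abs_eq_natAbs])
      · exact le_of_abs_le (by rw [Int.abs_eq_natAbs]))
  · rintro rfl; intro n j _; rfl

lemma antitone_cyl (ζ : ℤ → Bool) :
    Antitone (fun n : ℕ => cyl ζ (Finset.Icc (-(n : ℤ)) n)) := by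
  intro a b hab ω hω j hj
  exact hω j (Finset.Icc_subset_Icc (by exact_mod_cast neg_le_neg (Int.ofNat_le.2 hab))
    (by exact_mod_cast hab) hj)

lemma tendsto_cyl [IsFiniteMeasure μ] (ζ : ℤ → Bool) :
    Tendsto (fun n : ℕ => μ (cyl ζ (Finset.Icc (-(n : ℤ)) n))) atTop (𝓝 (μ {ζ})) := by
  have := tendsto_measure_iInter_atTop
    (s := fun n : ℕ => cyl ζ (Finset.Icc (-(n : ℤ)) n))
    (fun n => (measurableSet_cyl ζ _).nullMeasurableSet) (antitone_cyl ζ)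
    ⟨0, measure_ne_top μ _⟩
  rwa [iInter_cyl ζ] at this

/-- key comparison: two configurations agreeing off a finite set -/
lemma ratio_lemma [IsFiniteMeasure μ]
    (hind : iIndepFun (fun i (ζ : ℤ → Bool) => ζ i) μ)
    (m : ℤ → Bool → ENNReal) (hm : ∀ j b, μ {ω | ω j = b} = m j b)
    (hmtop : ∀ j b, m j b ≠ ⊤)
    (ζ η : ℤ → Bool) (F : Finset ℤ) (hF : ∀ j ∉ F, ζ j = η j) :
    μ {ζ} * ∏ j ∈ F, m j (η j) = μ {η} * ∏ j ∈ F, m j (ζ j) := by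
  have hP : ∀ (x : ℤ → Bool) (S : Finset ℤ), μ (cyl x S) = ∏ j ∈ S, m j (x j) := by
    intro x S
    rw [meas_cyl hind]
    exact Finset.prod_congr rfl fun j _ => hm j (x j)
  have hprodne : ∀ (x : ℤ → Bool), (∏ j ∈ F, m j (x j)) ≠ ⊤ := fun x =>
    ENNReal.prod_ne_top fun j _ => hmtop j (x j)
  have t1 : Tendsto (fun n : ℕ => μ (cyl ζ (Finset.Icc (-(n:ℤ)) n)) * ∏ j ∈ F, m j (η j))
      atTop (𝓝 (μ {ζ} * ∏ j ∈ F, m j (η j))) :=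
    ENNReal.Tendsto.mul_const (tendsto_cyl ζ) (Or.inr (hprodne η))
  have t2 : Tendsto (fun n : ℕ => μ (cyl η (Finset.Icc (-(n:ℤ)) n)) * ∏ j ∈ F, m j (ζ j))
      atTop (𝓝 (μ {η} * ∏ j ∈ F, m j (ζ j))) :=
    ENNReal.Tendsto.mul_const (tendsto_cyl η) (Or.inr (hprodne ζ))
  refine tendsto_nhds_unique (t1.congr' ?_) t2
  filter_upwards [icc_subset F] with n hn
  rw [hP, hP]
  rw [← Finset.prod_sdiff hn, ← Finset.prod_sdiff hn]
  have heq : ∏ j ∈ Finset.Icc (-(n:ℤ)) n \ F, m j (ζ j)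
      = ∏ j ∈ Finset.Icc (-(n:ℤ)) n \ F, m j (η j) := by
    refine Finset.prod_congr rfl fun j hj => ?_
    rw [hF j (Finset.mem_sdiff.1 hj).2]
  rw [heq]; ring



def eta (Z : ℤ) : ℤ → Bool := fun j => decide (Z ≤ j)

lemma eta_true {Z j : ℤ} (h : Z ≤ j) : eta Z j = true := decide_eq_true h
lemma eta_false {Z j : ℤ} (h : j < Z) : eta Z j = false := decide_eq_false (not_le.2 h)

lemma diff_eta_eq (Z : ℤ) (ζ : ℤ → Bool) :
    {j : ℤ | ζ j ≠ eta Z j} =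
      {j : ℤ | j < Z ∧ ζ j = true} ∪ {j : ℤ | Z ≤ j ∧ ζ j = false} := by
  ext j
  by_cases h : Z ≤ j
  · simp [eta_true h, h, not_lt.2 h, Bool.not_eq_true]
  · push_neg at h
    simp [eta_false h, h, not_le.2 h, Bool.not_eq_false]

lemma diff_eta_finite {Z : ℤ} {ζ : ℤ → Bool} (h : ζ ∈ OmegaZ Z) :
    {j : ℤ | ζ j ≠ eta Z j}.Finite := by
  rw [diff_eta_eq]
  exact h.1.union h.2.1

lemma finite_agree_off (η : ℤ → Bool) (F : Finset ℤ) :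
    {ζ : ℤ → Bool | ∀ j ∉ F, ζ j = η j}.Finite := by
  have : Set.Finite (Set.univ : Set ({x // x ∈ F} → Bool)) := Set.toFinite _
  refine Set.Finite.of_finite_image (f := fun ζ (j : {x // x ∈ F}) => ζ (j : ℤ))
    (this.subset (Set.subset_univ _)) ?_
  intro ζ hζ ζ' hζ' hee
  funext j
  by_cases hj : j ∈ F
  · exact congrFun hee ⟨j, hj⟩
  · rw [hζ j hj, hζ' j hj]

lemma countable_finite_diff (η : ℤ → Bool) :
    {ζ : ℤ → Bool | {j : ℤ | ζ j ≠ η j}.Finite}.Countable := by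
  have hsub : {ζ : ℤ → Bool | {j : ℤ | ζ j ≠ η j}.Finite} ⊆
      ⋃ F : Finset ℤ, {ζ : ℤ → Bool | ∀ j ∉ F, ζ j = η j} := by
    intro ζ hζ
    exact Set.mem_iUnion.2 ⟨hζ.toFinset, fun j hj => by
      by_contra hne
      exact hj (hζ.mem_toFinset.2 hne)⟩
  exact Set.Countable.mono hsub
    (Set.countable_iUnion fun F => (finite_agree_off η F).countable)

lemma countable_OmegaZ (Z : ℤ) : (OmegaZ Z).Countable :=
  (countable_finite_diff (eta Z)).mono fun ζ hζ => diff_eta_finite hζ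

lemma measurableSet_OmegaZ (Z : ℤ) : MeasurableSet (OmegaZ Z) :=
  (countable_OmegaZ Z).measurableSet

lemma eta_mem (Z : ℤ) : eta Z ∈ OmegaZ Z := by
  have h1 : {j : ℤ | j < Z ∧ eta Z j = true} = ∅ := by
    ext j; simp only [Set.mem_setOf_eq, Set.mem_empty_iff_false, iff_false, not_and]
    intro hj; rw [eta_false hj]; simp
  have h2 : {j : ℤ | Z ≤ j ∧ eta Z j = false} = ∅ := by
    ext j; simp only [Set.mem_setOf_eq, Set.mem_empty_iff_false, iff_false, not_and]
    intro hj; rw [eta_true hj]; simp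
  refine ⟨h1 ▸ Set.finite_empty, h2 ▸ Set.finite_empty, by rw [h1, h2]⟩

/-! shift -/

def shift (k : ℤ) (ζ : ℤ → Bool) : ℤ → Bool := fun j => ζ (j - k)

lemma shift_shift (k : ℤ) (ζ : ℤ → Bool) : shift (-k) (shift k ζ) = ζ := by
  funext j; simp [shift, sub_neg_eq_add]

lemma shift_injective (k : ℤ) : Function.Injective (shift k) := by
  intro ζ ζ' h
  rw [← shift_shift k ζ, ← shift_shift k ζ', h]

lemma shift_eta (k Z : ℤ) : shift k (eta Z) = eta (Z + k) := by
  funext j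
  simp only [shift, eta]
  exact decide_eq_decide.2 (by omega)

lemma shift_true_set (k Z : ℤ) (ζ : ℤ → Bool) :
    {j : ℤ | j < Z + k ∧ shift k ζ j = true} = (fun j => j + k) '' {j : ℤ | j < Z ∧ ζ j = true} := by
  ext j
  simp only [Set.mem_setOf_eq, Set.mem_image, shift]
  constructor
  · rintro ⟨h1, h2⟩
    exact ⟨j - k, ⟨by omega, h2⟩, by omega⟩
  · rintro ⟨x, ⟨h1, h2⟩, rfl⟩
    exact ⟨by omega, by simpa using h2⟩

lemma shift_false_set (k Z : ℤ) (ζ : ℤ → Bool) :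
    {j : ℤ | Z + k ≤ j ∧ shift k ζ j = false} =
      (fun j => j + k) '' {j : ℤ | Z ≤ j ∧ ζ j = false} := by
  ext j
  simp only [Set.mem_setOf_eq, Set.mem_image, shift]
  constructor
  · rintro ⟨h1, h2⟩
    exact ⟨j - k, ⟨by omega, h2⟩, by omega⟩
  · rintro ⟨x, ⟨h1, h2⟩, rfl⟩
    exact ⟨by omega, by simpa using h2⟩

lemma shift_mem_OmegaZ {Z : ℤ} (k : ℤ) {ζ : ℤ → Bool} (h : ζ ∈ OmegaZ Z) :
    shift k ζ ∈ OmegaZ (Z + k) := by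
  obtain ⟨h1, h2, h3⟩ := h
  have hinj : Function.Injective (fun j : ℤ => j + k) := add_left_injective k
  refine ⟨?_, ?_, ?_⟩
  · rw [shift_true_set]; exact h1.image _
  · rw [shift_false_set]; exact h2.image _
  · rw [shift_true_set, shift_false_set, Set.ncard_image_of_injective _ hinj,
      Set.ncard_image_of_injective _ hinj, h3]

lemma shift_image_OmegaZ (Z k : ℤ) : shift k '' OmegaZ Z = OmegaZ (Z + k) := by
  apply Set.eq_of_subset_of_subset
  · rintro _ ⟨ζ, hζ, rfl⟩
    exact shift_mem_OmegaZ k hζ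
  · intro ζ hζ
    refine ⟨shift (-k) ζ, ?_, ?_⟩
    · have := shift_mem_OmegaZ (-k) hζ
      simpa using this
    · have := shift_shift (-k) ζ
      simpa using this



lemma singleton_pos [IsProbabilityMeasure μ]
    (hind : iIndepFun (fun i (ζ : ℤ → Bool) => ζ i) μ)
    (m : ℤ → Bool → ENNReal) (hm : ∀ j b, μ {ω | ω j = b} = m j b)
    (hm0 : ∀ j b, m j b ≠ 0) (η : ℤ → Bool)
    (hsum : (∑' j : ℤ, m j (!η j)) ≠ ⊤) :
    0 < μ {η} := by
  -- choose a finite window W with small tail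
  obtain ⟨W, hW⟩ : ∃ W : Finset ℤ, (∑' j : {x : ℤ // x ∉ W}, m (j : ℤ) (!η (j : ℤ))) < 1/2 := by
    have := (tendsto_order.1 (ENNReal.tendsto_tsum_compl_atTop_zero hsum)).2 (1/2) (by norm_num)
    exact this.exists
  -- the event of agreeing with η outside W
  set E : Set (ℤ → Bool) := ⋂ n : ℕ, cyl η (Finset.Icc (-(n : ℤ)) n \ W) with hE
  have hEmeas : MeasurableSet E := MeasurableSet.iInter fun n => measurableSet_cyl _ _
  have hEeq : E = {ω : ℤ → Bool | ∀ j ∉ W, ω j = η j} := by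
    ext ω
    simp only [hE, Set.mem_iInter, cyl, Set.mem_setOf_eq, Finset.mem_sdiff]
    constructor
    · intro h j hj
      exact h j.natAbs j ⟨by
        rw [Finset.mem_Icc]
        exact ⟨neg_le_of_abs_le (by rw [Int.abs_eq_natAbs]),
          le_of_abs_le (by rw [Int.abs_eq_natAbs])⟩, hj⟩
    · intro h n j hj
      exact h j hj.2
  -- complement bound
  have hcompl : μ Eᶜ ≤ ∑' j : {x : ℤ // x ∉ W}, m (j : ℤ) (!η (j : ℤ)) := by
    have hsub : Eᶜ ⊆ ⋃ j ∈ {x : ℤ | x ∉ W}, {ω : ℤ → Bool | ω j = !η j} := by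
      intro ω hω
      rw [hEeq] at hω
      simp only [Set.mem_compl_iff, Set.mem_setOf_eq, not_forall] at hω
      obtain ⟨j, hj, hne⟩ := hω
      refine Set.mem_biUnion hj ?_
      simp only [Set.mem_setOf_eq]
      cases hb : ω j
      · cases hb' : η j
        · exact absurd (hb.trans hb'.symm) hne
        · simp [hb']
      · cases hb' : η j
        · simp [hb']
        · exact absurd (hb.trans hb'.symm) hne
    calc μ Eᶜ ≤ ∑' j : {x : ℤ | x ∉ W}, μ {ω : ℤ → Bool | ω (j:ℤ) = !η (j:ℤ)} :=
          le_trans (measure_mono hsub) (measure_biUnion_le μ (Set.to_countable _) _)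
      _ = ∑' j : {x : ℤ // x ∉ W}, m (j : ℤ) (!η (j : ℤ)) := by
          refine tsum_congr fun j => hm _ _
  have hEpos : μ E ≠ 0 := by
    intro h0
    have h1 : (1 : ENNReal) ≤ μ E + μ Eᶜ := by
      rw [← measure_univ (μ := μ)]
      refine le_trans (measure_mono (by simp [Set.union_compl_self])) (measure_union_le E Eᶜ)
    rw [h0, zero_add] at h1
    have : (1:ENNReal) < 1 := lt_of_le_of_lt (h1.trans (hcompl.trans hW.le)) (by norm_num)
    exact absurd this (lt_irrefl _)
  -- split μ {η} = μ (cyl η W) * μ E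
  have hsplit : μ {η} = μ (cyl η W) * μ E := by
    have hT : Tendsto (fun n : ℕ => μ (cyl η W) * μ (cyl η (Finset.Icc (-(n:ℤ)) n \ W)))
        atTop (𝓝 (μ (cyl η W) * μ E)) := by
      refine ENNReal.Tendsto.const_mul ?_ (Or.inr (measure_ne_top μ _))
      have hanti : Antitone (fun n : ℕ => cyl η (Finset.Icc (-(n:ℤ)) n \ W)) := by
        intro a b hab ω hω j hj
        refine hω j ?_
        rw [Finset.mem_sdiff] at hj ⊢
        refine ⟨Finset.Icc_subset_Icc ?_ ?_ hj.1, hj.2⟩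
        · exact_mod_cast neg_le_neg (Int.ofNat_le.2 hab)
        · exact_mod_cast hab
      exact tendsto_measure_iInter_atTop
        (fun n => (measurableSet_cyl _ _).nullMeasurableSet) hanti ⟨0, measure_ne_top μ _⟩
    refine tendsto_nhds_unique ((tendsto_cyl η).congr' ?_) hT
    filter_upwards [icc_subset W] with n hn
    rw [meas_cyl hind, meas_cyl hind, meas_cyl hind, ← Finset.prod_sdiff hn]
    ring
  rw [hsplit]
  refine lt_of_le_of_ne zero_le (Ne.symm (mul_ne_zero ?_ hEpos))
  rw [meas_cyl hind]
  refine Finset.prod_ne_zero_iff.2 fun j _ => ?_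
  rw [hm]
  exact hm0 _ _



noncomputable def fm (r : ℝ) : ℤ → ℝ := fun i => r ^ i / (1 + r ^ i)

noncomputable def mm (r : ℝ) : ℤ → Bool → ENNReal := fun i b =>
  if b then ENNReal.ofReal (fm r i) else ENNReal.ofReal (1 - fm r i)

variable {r : ℝ} (hr : 1 < r)

section
include hr

lemma r0 : (0:ℝ) < r := lt_trans one_pos hr
lemma rz_pos (i : ℤ) : (0:ℝ) < r ^ i := zpow_pos (r0 hr) i
lemma denom_pos (i : ℤ) : (0:ℝ) < 1 + r ^ i := by linarith [rz_pos hr i]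
lemma fm_pos (i : ℤ) : 0 < fm r i := div_pos (rz_pos hr i) (denom_pos hr i)
lemma fm_lt_one (i : ℤ) : fm r i < 1 := by
  rw [fm, div_lt_one (denom_pos hr i)]; linarith [rz_pos hr i]
lemma one_sub_fm (i : ℤ) : 1 - fm r i = 1 / (1 + r ^ i) := by
  rw [fm]; field_simp; ring

lemma mm_ne_zero (i : ℤ) (b : Bool) : mm r i b ≠ 0 := by
  cases b
  · simp only [mm, Bool.false_eq_true, if_false]
    exact (ENNReal.ofReal_pos.2 (by linarith [fm_lt_one hr i])).ne'
  · simp only [mm, if_true]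
    exact (ENNReal.ofReal_pos.2 (fm_pos hr i)).ne'

omit hr in
lemma mm_ne_top (i : ℤ) (b : Bool) : mm r i b ≠ ⊤ := by
  cases b <;> simp [mm]

/-- the shift factor identity -/
lemma mm_shift (k j : ℤ) (b : Bool) :
    mm r (j + k) b =
      ENNReal.ofReal ((1 + r ^ j) / (1 + r ^ (j + k))) *
        ((if b then ENNReal.ofReal (r ^ k) else 1) * mm r j b) := by
  have h0 := r0 hr
  have hdj := denom_pos hr j
  have hdjk := denom_pos hr (j + k)
  cases b
  · simp only [mm, if_false, Bool.false_eq_true, one_mul]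
    rw [← ENNReal.ofReal_mul (by positivity)]
    congr 1
    rw [one_sub_fm hr, one_sub_fm hr]
    field_simp
  · simp only [mm, if_true]
    rw [← ENNReal.ofReal_mul (by positivity), ← ENNReal.ofReal_mul (by positivity)]
    congr 1
    rw [fm, fm, zpow_add₀ (ne_of_gt h0)]
    field_simp

/-- summability of the tail weights -/
lemma summable_tail (Z : ℤ) :
    Summable (fun j : ℤ => if j < Z then fm r j else 1 - fm r j) := by
  have h0 := r0 hr
  set x : ℝ := r⁻¹ with hx
  have hx0 : 0 < x := inv_pos.2 h0
  have hx1 : x < 1 := inv_lt_one_of_one_lt₀ hr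
  set C : ℝ := r ^ (Z:ℤ) + r ^ (-Z:ℤ) with hC
  have hCpos : 0 < C := by positivity
  have hg : Summable (fun j : ℤ => C * x ^ (j - Z).natAbs) := by
    refine Summable.mul_left C ?_
    have hbase : Summable (fun j : ℤ => x ^ j.natAbs) := by
      refine Summable.of_nat_of_neg ?_ ?_
      · simpa using summable_geometric_of_lt_one hx0.le hx1
      · simpa using summable_geometric_of_lt_one hx0.le hx1
    have := (Equiv.subRight Z).summable_iff.2 hbase
    exact this
  refine Summable.of_norm_bounded hg ?_
  intro j
  have hxn : (0:ℝ) < x ^ (j - Z).natAbs := pow_pos hx0 _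
  have hxpow : x ^ (j - Z).natAbs = r ^ (-((j - Z).natAbs : ℤ)) := by
    rw [hx, inv_pow, ← zpow_natCast, ← zpow_neg]
  by_cases hj : j < Z
  · rw [if_pos hj, Real.norm_eq_abs, abs_of_pos (fm_pos hr j)]
    have h1 : fm r j ≤ r ^ j := by
      rw [fm]
      refine div_le_self (le_of_lt (rz_pos hr j)) (by linarith [rz_pos hr j])
    have h2 : r ^ j = x ^ (j - Z).natAbs * r ^ (Z:ℤ) := by
      rw [hxpow, ← zpow_add₀ (ne_of_gt h0)]
      congr 1
      omega
    have h3 : x ^ (j - Z).natAbs * r ^ (Z:ℤ) ≤ C * x ^ (j - Z).natAbs := by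
      rw [hC, add_mul]
      nlinarith [rz_pos hr (-Z), hxn]
    linarith
  · push_neg at hj
    rw [if_neg (not_lt.2 hj), Real.norm_eq_abs, abs_of_pos (by linarith [fm_lt_one hr j])]
    have h1 : 1 - fm r j ≤ r ^ (-j) := by
      rw [one_sub_fm hr, zpow_neg, ← one_div]
      exact one_div_le_one_div_of_le (rz_pos hr j) (by linarith)
    have h2 : r ^ (-j) = x ^ (j - Z).natAbs * r ^ (-Z:ℤ) := by
      rw [hxpow, ← zpow_add₀ (ne_of_gt h0)]
      congr 1
      omega
    have h3 : x ^ (j - Z).natAbs * r ^ (-Z:ℤ) ≤ C * x ^ (j - Z).natAbs := by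
      rw [hC, add_mul]
      nlinarith [rz_pos hr (Z:ℤ), hxn]
    linarith
end





include hr in
/-- shifted product in terms of unshifted product and particle count -/
lemma prod_shift (k : ℤ) (F : Finset ℤ) (x : ℤ → Bool) :
    (∏ j ∈ F, mm r (j + k) (x j)) =
      (∏ j ∈ F, ENNReal.ofReal ((1 + r ^ j) / (1 + r ^ (j + k)))) *
        (ENNReal.ofReal (r ^ k)) ^ (F.filter fun j => x j = true).card *
        ∏ j ∈ F, mm r j (x j) := by
  calc (∏ j ∈ F, mm r (j + k) (x j))
      = ∏ j ∈ F, (ENNReal.ofReal ((1 + r ^ j) / (1 + r ^ (j + k))) *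
          ((if x j = true then ENNReal.ofReal (r ^ k) else 1) * mm r j (x j))) :=
        Finset.prod_congr rfl fun j _ => by
          cases hxx : x j
          · simpa [hxx] using mm_shift hr k j false
          · simpa [hxx] using mm_shift hr k j true
    _ = (∏ j ∈ F, ENNReal.ofReal ((1 + r ^ j) / (1 + r ^ (j + k)))) *
          ((∏ j ∈ F, (if x j = true then ENNReal.ofReal (r ^ k) else 1)) *
            ∏ j ∈ F, mm r j (x j)) := by
        rw [Finset.prod_mul_distrib, Finset.prod_mul_distrib]
    _ = _ := by
        rw [← Finset.prod_filter (fun j => x j = true) (fun _ => ENNReal.ofReal (r ^ k)),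
          Finset.prod_const]
        ring

/-- the equal-count property on the difference set -/
lemma count_eq {Z : ℤ} {ζ : ℤ → Bool} (hζ : ζ ∈ OmegaZ Z) :
    ((diff_eta_finite hζ).toFinset.filter fun j => ζ j = true).card =
      ((diff_eta_finite hζ).toFinset.filter fun j => eta Z j = true).card := by
  obtain ⟨h1, h2, h3⟩ := hζ
  have e1 : (((diff_eta_finite ⟨h1, h2, h3⟩).toFinset.filter fun j => ζ j = true) : Set ℤ)
      = {j : ℤ | j < Z ∧ ζ j = true} := by
    ext j
    simp only [Finset.coe_filter, Set.Finite.mem_toFinset, Set.mem_setOf_eq]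
    constructor
    · rintro ⟨hne, ht⟩
      refine ⟨?_, ht⟩
      by_contra hge
      exact hne (by rw [ht, eta_true (not_lt.1 hge)])
    · rintro ⟨hlt, ht⟩
      exact ⟨by rw [ht, eta_false hlt]; simp, ht⟩
  have e2 : (((diff_eta_finite ⟨h1, h2, h3⟩).toFinset.filter fun j => eta Z j = true) : Set ℤ)
      = {j : ℤ | Z ≤ j ∧ ζ j = false} := by
    ext j
    simp only [Finset.coe_filter, Set.Finite.mem_toFinset, Set.mem_setOf_eq]
    constructor
    · rintro ⟨hne, ht⟩
      have hle : Z ≤ j := by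
        by_contra hlt
        rw [eta_false (not_le.1 hlt)] at ht; exact Bool.false_ne_true ht
      refine ⟨hle, ?_⟩
      cases hzz : ζ j
      · rfl
      · exact absurd (by rw [hzz, ht]) hne
    · rintro ⟨hle, hf⟩
      exact ⟨by rw [hf, eta_true hle]; simp, eta_true hle⟩
  have c1 := congrArg Set.ncard e1
  have c2 := congrArg Set.ncard e2
  rw [Set.ncard_coe_finset] at c1 c2
  exact c1.trans (h3.trans c2.symm)
  

include hr in
/-- master lemma: shifting a configuration in `OmegaZ Z` scales its point mass by the
ratio of the ground-state masses -/
lemma master [IsProbabilityMeasure μ]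
    (hind : iIndepFun (fun i (ζ : ℤ → Bool) => ζ i) μ)
    (hm : ∀ j b, μ {ω | ω j = b} = mm r j b)
    {Z : ℤ} (k : ℤ) {ζ : ℤ → Bool} (hζ : ζ ∈ OmegaZ Z) :
    μ {shift k ζ} * μ {eta Z} = μ {ζ} * μ {eta (Z + k)} := by
  classical
  set F : Finset ℤ := (diff_eta_finite hζ).toFinset with hFdef
  have hFdiff : ∀ j ∉ F, ζ j = eta Z j := by
    intro j hj
    by_contra hne
    exact hj ((diff_eta_finite hζ).mem_toFinset.2 hne)
  set F' : Finset ℤ := F.image (· + k) with hF'def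
  have hF'diff : ∀ j ∉ F', shift k ζ j = eta (Z + k) j := by
    intro j hj
    have hjk : (j - k) ∉ F := by
      intro hmem
      exact hj (Finset.mem_image.2 ⟨j - k, hmem, by omega⟩)
    have h := hFdiff _ hjk
    rw [shift, h, eta, eta]
    exact decide_eq_decide.2 (by omega)
  have R1 := ratio_lemma hind (mm r) hm (fun j b => mm_ne_top j b) ζ (eta Z) F hFdiff
  have R2 := ratio_lemma hind (mm r) hm (fun j b => mm_ne_top j b)
      (shift k ζ) (eta (Z + k)) F' hF'diff
  have hinj : ∀ x ∈ F, ∀ y ∈ F, x + k = y + k → x = y := fun x _ y _ h => by omega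
  have re1 : (∏ j ∈ F', mm r j (eta (Z + k) j)) = ∏ j ∈ F, mm r (j + k) (eta Z j) := by
    rw [hF'def, Finset.prod_image hinj]
    refine Finset.prod_congr rfl fun j _ => ?_
    congr 1
    rw [eta, eta]
    exact decide_eq_decide.2 (by omega)
  have re2 : (∏ j ∈ F', mm r j (shift k ζ j)) = ∏ j ∈ F, mm r (j + k) (ζ j) := by
    rw [hF'def, Finset.prod_image hinj]
    refine Finset.prod_congr rfl fun j _ => ?_
    congr 1
    simp [shift]
  rw [re1, re2] at R2
  have hcnt := count_eq hζ
  rw [prod_shift hr k F (eta Z), prod_shift hr k F ζ, ← hcnt] at R2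
  set GA : ENNReal := ∏ j ∈ F, ENNReal.ofReal ((1 + r ^ j) / (1 + r ^ (j + k))) with hGAdef
  set N : ℕ := (F.filter fun j => ζ j = true).card with hNdef
  set G : ENNReal := GA * (ENNReal.ofReal (r ^ k)) ^ N with hGdef
  have hG0 : G ≠ 0 := by
    refine mul_ne_zero ?_ (pow_ne_zero _ ?_)
    · exact Finset.prod_ne_zero_iff.2 fun j _ =>
        (ENNReal.ofReal_pos.2 (div_pos (denom_pos hr j) (denom_pos hr (j + k)))).ne'
    · exact (ENNReal.ofReal_pos.2 (zpow_pos (r0 hr) k)).ne'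
  have hGtop : G ≠ ⊤ :=
    ENNReal.mul_ne_top (ENNReal.prod_ne_top fun j _ => ENNReal.ofReal_ne_top)
      (ENNReal.pow_ne_top ENNReal.ofReal_ne_top)
  set PFη : ENNReal := ∏ j ∈ F, mm r j (eta Z j) with hPηdef
  set PFζ : ENNReal := ∏ j ∈ F, mm r j (ζ j) with hPζdef
  have R2' : μ {shift k ζ} * PFη = μ {eta (Z + k)} * PFζ := by
    have key : G * (μ {shift k ζ} * PFη) = G * (μ {eta (Z + k)} * PFζ) := by
      calc G * (μ {shift k ζ} * PFη) = μ {shift k ζ} * (GA * ENNReal.ofReal (r ^ k) ^ N * PFη) := by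
            rw [hGdef]; ring
        _ = μ {eta (Z + k)} * (GA * ENNReal.ofReal (r ^ k) ^ N * PFζ) := R2
        _ = G * (μ {eta (Z + k)} * PFζ) := by rw [hGdef]; ring
    exact (ENNReal.mul_right_inj hG0 hGtop).1 key
  have hPη0 : PFη ≠ 0 := Finset.prod_ne_zero_iff.2 fun j _ => mm_ne_zero hr j _
  have hPηtop : PFη ≠ ⊤ := ENNReal.prod_ne_top fun j _ => mm_ne_top j _
  have key : PFη * (μ {shift k ζ} * μ {eta Z}) = PFη * (μ {ζ} * μ {eta (Z + k)}) := by
    calc PFη * (μ {shift k ζ} * μ {eta Z}) = (μ {shift k ζ} * PFη) * μ {eta Z} := by ring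
      _ = (μ {eta (Z + k)} * PFζ) * μ {eta Z} := by rw [R2']
      _ = μ {eta (Z + k)} * (μ {eta Z} * PFζ) := by ring
      _ = μ {eta (Z + k)} * (μ {ζ} * PFη) := by rw [← R1]
      _ = PFη * (μ {ζ} * μ {eta (Z + k)}) := by ring
  exact (ENNReal.mul_right_inj hPη0 hPηtop).1 key


/-- measure of a countable set is the sum of its point masses -/
lemma meas_countable (μ : Measure (ℤ → Bool)) {t : Set (ℤ → Bool)} (ht : t.Countable) :
    μ t = ∑' x : t, μ {(x : ℤ → Bool)} := by
  conv_lhs => rw [← Set.biUnion_of_singleton t]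
  exact measure_biUnion ht (fun x _ y _ hxy => by simp [Function.onFun, hxy])
    fun x _ => measurableSet_singleton x

include hr in
/-- summation of the master lemma over a subset of `OmegaZ Z` -/
lemma sum_shift [IsProbabilityMeasure μ]
    (hind : iIndepFun (fun i (ζ : ℤ → Bool) => ζ i) μ)
    (hm : ∀ j b, μ {ω | ω j = b} = mm r j b)
    {Z : ℤ} (k : ℤ) {s : Set (ℤ → Bool)} (hs : s ⊆ OmegaZ Z) :
    μ (shift k '' s) * μ {eta Z} = μ s * μ {eta (Z + k)} := by
  have hsc : s.Countable := (countable_OmegaZ Z).mono hs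
  have hsc' : (shift k '' s).Countable := hsc.image _
  rw [meas_countable μ hsc, meas_countable μ hsc']
  have hre : (∑' y : (shift k '' s), μ {(y : ℤ → Bool)}) = ∑' x : s, μ {shift k (x : ℤ → Bool)} := by
    rw [← Equiv.tsum_eq (Equiv.Set.image (shift k) s (shift_injective k))
      (fun y : (shift k '' s) => μ {(y : ℤ → Bool)})]
    rfl
  rw [hre, ← ENNReal.tsum_mul_right, ← ENNReal.tsum_mul_right]
  exact tsum_congr fun x => master hr hind hm k (hs x.2)

lemma shift_image_true (k i : ℤ) :
    shift k '' {ζ : ℤ → Bool | ζ i = true} = {ζ : ℤ → Bool | ζ (i + k) = true} := by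
  ext ω
  simp only [Set.mem_image, Set.mem_setOf_eq]
  constructor
  · rintro ⟨ζ, hζ, rfl⟩
    simpa [shift] using hζ
  · intro h
    refine ⟨shift (-k) ω, ?_, ?_⟩
    · simpa [shift] using h
    · have := shift_shift (-k) ω
      simpa using this

end Stmt7Aux

open Stmt7Aux in
/-- Translation covariance of the conditioned blocking measures:
`μ_Z(i) = μ_{Z+k}(i+k)`. -/
theorem stmt_7 (p : ℝ) (hp : 1 / 2 < p) (hp1 : p < 1)
    (μ : Measure (ℤ → Bool)) [IsProbabilityMeasure μ]
    (hind : iIndepFun (fun i (ζ : ℤ → Bool) => ζ i) μ)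
    (hmarg : ∀ i : ℤ, μ {ζ | ζ i = true} =
      ENNReal.ofReal ((p / (1 - p)) ^ i / (1 + (p / (1 - p)) ^ i))) :
    ∀ Z k i : ℤ,
      μ[|OmegaZ Z] {ζ | ζ i = true} = μ[|OmegaZ (Z + k)] {ζ | ζ (i + k) = true} := by
  intro Z k i
  set r : ℝ := p / (1 - p) with hrdef
  have hr : 1 < r := by
    rw [hrdef]
    rw [lt_div_iff₀ (by linarith)]
    linarith
  -- the marginals
  have hm : ∀ (j : ℤ) (b : Bool), μ {ω : ℤ → Bool | ω j = b} = mm r j b := by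
    intro j b
    cases b
    · have hcompl : {ω : ℤ → Bool | ω j = false} = {ω : ℤ → Bool | ω j = true}ᶜ := by
        ext ω
        simp [Bool.not_eq_true]
      rw [hcompl, prob_compl_eq_one_sub (measurableSet_eval j true), hmarg j]
      simp only [mm, Bool.false_eq_true, if_false]
      rw [ENNReal.ofReal_sub _ (le_of_lt (fm_pos hr j)), ENNReal.ofReal_one]
      rfl
    · rw [hmarg j]
      simp only [mm, if_true]
      rfl
  -- positivity of the ground states
  have hpos : ∀ Z' : ℤ, 0 < μ {eta Z'} := by
    intro Z'
    refine singleton_pos hind (mm r) hm (fun j b => mm_ne_zero hr j b) (eta Z') ?_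
    have hc : ∀ j : ℤ, mm r j (!eta Z' j) =
        ENNReal.ofReal (if j < Z' then fm r j else 1 - fm r j) := by
      intro j
      by_cases hj : j < Z'
      · rw [eta_false hj, if_pos hj]
        rfl
      · rw [eta_true (not_lt.1 hj), if_neg hj]
        rfl
    rw [tsum_congr hc, ← ENNReal.ofReal_tsum_of_nonneg ?_ (summable_tail hr Z')]
    · exact ENNReal.ofReal_ne_top
    · intro j
      by_cases hj : j < Z'
      · rw [if_pos hj]; exact le_of_lt (fm_pos hr j)
      · rw [if_neg hj]; linarith [fm_lt_one hr j]
  -- the two scaling relations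
  have relT : μ (OmegaZ (Z + k) ∩ {ζ : ℤ → Bool | ζ (i + k) = true}) * μ {eta Z}
      = μ (OmegaZ Z ∩ {ζ : ℤ → Bool | ζ i = true}) * μ {eta (Z + k)} := by
    have h := sum_shift hr hind hm (Z := Z) k
      (s := OmegaZ Z ∩ {ζ : ℤ → Bool | ζ i = true}) Set.inter_subset_left
    rwa [Set.image_inter (shift_injective k), shift_image_OmegaZ, shift_image_true] at h
  have relO : μ (OmegaZ (Z + k)) * μ {eta Z} = μ (OmegaZ Z) * μ {eta (Z + k)} := by
    have h := sum_shift hr hind hm (Z := Z) k (s := OmegaZ Z) subset_rfl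
    rwa [shift_image_OmegaZ] at h
  -- final algebra
  rw [cond_apply (measurableSet_OmegaZ Z), cond_apply (measurableSet_OmegaZ (Z + k))]
  set a := μ (OmegaZ Z ∩ {ζ : ℤ → Bool | ζ i = true}) with hadef
  set a' := μ (OmegaZ (Z + k) ∩ {ζ : ℤ → Bool | ζ (i + k) = true}) with ha'def
  set b := μ (OmegaZ Z) with hbdef
  set b' := μ (OmegaZ (Z + k)) with hb'def
  set h := μ {eta Z} with hhdef
  set h' := μ {eta (Z + k)} with hh'def
  have hb0 : b ≠ 0 :=
    (lt_of_lt_of_le (hpos Z) (measure_mono (Set.singleton_subset_iff.2 (eta_mem Z)))).ne'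
  have hb'0 : b' ≠ 0 :=
    (lt_of_lt_of_le (hpos (Z + k))
      (measure_mono (Set.singleton_subset_iff.2 (eta_mem (Z + k))))).ne'
  have hbt : b ≠ ⊤ := measure_ne_top μ _
  have hb't : b' ≠ ⊤ := measure_ne_top μ _
  have hat : a ≠ ⊤ := measure_ne_top μ _
  have ha't : a' ≠ ⊤ := measure_ne_top μ _
  have hht : h ≠ ⊤ := measure_ne_top μ _
  have hh't : h' ≠ ⊤ := measure_ne_top μ _
  refine (ENNReal.toReal_eq_toReal_iff' ?_ ?_).1 ?_
  · exact ENNReal.mul_ne_top (ENNReal.inv_ne_top.2 hb0) hat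
  · exact ENNReal.mul_ne_top (ENNReal.inv_ne_top.2 hb'0) ha't
  rw [ENNReal.toReal_mul, ENNReal.toReal_mul, ENNReal.toReal_inv, ENNReal.toReal_inv]
  have e1 : a'.toReal * h.toReal = a.toReal * h'.toReal := by
    rw [← ENNReal.toReal_mul, ← ENNReal.toReal_mul, relT]
  have e2 : b'.toReal * h.toReal = b.toReal * h'.toReal := by
    rw [← ENNReal.toReal_mul, ← ENNReal.toReal_mul, relO]
  have hbpos : 0 < b.toReal := ENNReal.toReal_pos hb0 hbt
  have hb'pos : 0 < b'.toReal := ENNReal.toReal_pos hb'0 hb't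
  have hhpos : 0 < h.toReal := ENNReal.toReal_pos (hpos Z).ne' hht
  have hh'pos : 0 < h'.toReal := ENNReal.toReal_pos (hpos (Z + k)).ne' hh't
  have key : a.toReal * b'.toReal = a'.toReal * b.toReal := by
    have hmul : (a.toReal * b'.toReal) * h.toReal = (a'.toReal * b.toReal) * h.toReal := by
      calc a.toReal * b'.toReal * h.toReal = a.toReal * (b'.toReal * h.toReal) := by ring
        _ = a.toReal * (b.toReal * h'.toReal) := by rw [e2]
        _ = (a.toReal * h'.toReal) * b.toReal := by ring
        _ = (a'.toReal * h.toReal) * b.toReal := by rw [← e1]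
        _ = a'.toReal * b.toReal * h.toReal := by ring
    exact mul_right_cancel₀ hhpos.ne' hmul
  rw [inv_mul_eq_div, inv_mul_eq_div, div_eq_div_iff hbpos.ne' hb'pos.ne']
  linarith [key]
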